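/- If t₁ + ⋯ + tₙ = δ (reals, n ≥ 2), then there exists a non-zero polynomial P in n variables with real coefficients such that P(t₁², …, tₙ²) = 0 whenever the linear relation holds, where in P one of the squared variables may be taken to be δ² itself; i.e., any linear dependence among real numbers forces a non-trivial polynomial dependence among their squares. -/

import Mathlib

open MvPolynomial

noncomputable section SqElim

variable {m : ℕ}

def sgn (b : Bool) : ℝ := if b then 1 else -1

def lform (ε : Fin m → Bool) : MvPolynomial (Fin m) ℝ :=
  ∑ i, C (sgn (ε i)) * X i

def flipHom (j : Fin m) : MvPolynomial (Fin m) ℝ →ₐ[ℝ] MvPolynomial (Fin m) ℝ :=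
  aeval (fun i => if i = j then -X i else X i)

lemma flipHom_monomial (j : Fin m) (d : Fin m →₀ ℕ) (c : ℝ) :
    flipHom j (monomial d c) = C ((-1 : ℝ) ^ (d j)) * monomial d c := by
  classical
  rw [flipHom, aeval_monomial, monomial_eq]
  have : (d.prod fun i k => (if i = j then -X i else X i : MvPolynomial (Fin m) ℝ) ^ k)
      = C ((-1 : ℝ) ^ (d j)) * d.prod fun i k => (X i : MvPolynomial (Fin m) ℝ) ^ k := by
    rw [Finsupp.prod, Finsupp.prod]
    have hC : (C ((-1 : ℝ) ^ (d j)) : MvPolynomial (Fin m) ℝ) = (-1) ^ (d j) := by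
      simp
    by_cases hj : j ∈ d.support
    · rw [← Finset.prod_erase_mul _ _ hj, ← Finset.prod_erase_mul _ _ hj,
        Finset.prod_congr rfl (fun i hi => by rw [if_neg (Finset.ne_of_mem_erase hi)]),
        if_pos rfl, neg_pow, hC]
      ring
    · rw [Finset.prod_congr rfl (fun i hi => by
        rw [if_neg (by rintro rfl; exact hj hi)]),
        Finsupp.notMem_support_iff.mp hj, pow_zero, map_one, one_mul]
  rw [this]
  ring_nf
  rw [algebraMap_eq]
  ring

lemma coeff_flipHom (j : Fin m) (F : MvPolynomial (Fin m) ℝ) (d : Fin m →₀ ℕ) :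
    coeff d (flipHom j F) = (-1 : ℝ) ^ (d j) * coeff d F := by
  classical
  conv_lhs => rw [F.as_sum]
  rw [map_sum]
  simp_rw [flipHom_monomial]
  simp_rw [C_mul_monomial]
  rw [coeff_sum]
  simp_rw [coeff_monomial]
  by_cases hd : d ∈ F.support
  · rw [Finset.sum_eq_single d (fun e _ he => by rw [if_neg he]) (fun h => absurd hd h)]
    rw [if_pos rfl]
  · rw [Finset.sum_eq_zero (fun e he => by
      rw [if_neg (by rintro rfl; exact hd he)]),
      MvPolynomial.notMem_support_iff.mp hd, mul_zero]

end SqElim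

noncomputable section SqElim2
variable {m : ℕ}

lemma flipHom_lform (j : Fin m) (ε : Fin m → Bool) :
    flipHom j (lform ε) = lform (Function.update ε j (!ε j)) := by
  classical
  rw [lform, lform, map_sum]
  refine Finset.sum_congr rfl fun i _ => ?_
  rw [map_mul]
  have hC : flipHom j (C (sgn (ε i))) = C (sgn (ε i)) := by
    rw [flipHom]; simp
  have hX : flipHom j (X i) = if i = j then -X i else X i := by
    rw [flipHom, aeval_X]
  rw [hC, hX]
  by_cases hij : i = j
  · subst hij
    rw [if_pos rfl, Function.update_self]
    have : sgn (!ε i) = - sgn (ε i) := by cases ε i <;> simp [sgn]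
    rw [this, map_neg]
    ring
  · rw [if_neg hij, Function.update_of_ne hij]

def bigF (m : ℕ) : MvPolynomial (Fin m) ℝ := ∏ ε : Fin m → Bool, lform ε

lemma flipHom_bigF (j : Fin m) : flipHom j (bigF m) = bigF m := by
  classical
  rw [bigF, map_prod]
  simp_rw [flipHom_lform]
  have hinv : Function.Involutive (fun ε : Fin m → Bool => Function.update ε j (!ε j)) := by
    intro ε
    funext i
    by_cases hij : i = j
    · subst hij; simp
    · simp [Function.update_of_ne hij]
  exact Equiv.prod_comp hinv.toPerm lform

lemma even_of_mem_support (d : Fin m →₀ ℕ) (hd : coeff d (bigF m) ≠ 0) (j : Fin m) :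
    2 * (d j / 2) = d j := by
  have h := coeff_flipHom j (bigF m) d
  rw [flipHom_bigF] at h
  rcases Nat.even_or_odd (d j) with he | ho
  · exact Nat.two_mul_div_two_of_even he
  · exfalso
    rw [ho.neg_one_pow, neg_one_mul] at h
    exact hd (by linarith [h])

end SqElim2

noncomputable section SqElim3
variable {m : ℕ}

lemma expand_two_monomial (d : Fin m →₀ ℕ) (c : ℝ) :
    expand 2 (monomial d c) = monomial (2 • d) c := by
  classical
  rw [expand_monomial, monomial_eq, Finsupp.prod]

def halfExp (d : Fin m →₀ ℕ) : Fin m →₀ ℕ := Finsupp.mapRange (· / 2) (by simp) d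

def bigP (m : ℕ) : MvPolynomial (Fin m) ℝ :=
  ∑ d ∈ (bigF m).support, monomial (halfExp d) (coeff d (bigF m))

lemma expand_bigP : expand 2 (bigP m) = bigF m := by
  classical
  rw [bigP, map_sum]
  conv_rhs => rw [(bigF m).as_sum]
  refine Finset.sum_congr rfl fun d hd => ?_
  rw [expand_two_monomial]
  have hdd : 2 • halfExp d = d := by
    ext j
    rw [Finsupp.smul_apply, smul_eq_mul, halfExp, Finsupp.mapRange_apply]
    exact even_of_mem_support d (MvPolynomial.mem_support_iff.mp hd) j
  rw [hdd]

lemma lform_ne_zero (hm : m ≠ 0) (ε : Fin m → Bool) : lform ε ≠ 0 := by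
  intro h
  have := congrArg (eval fun i => sgn (ε i)) h
  rw [lform, map_zero, map_sum] at this
  simp only [eval_mul, eval_C, eval_X] at this
  have hone : ∀ i : Fin m, sgn (ε i) * sgn (ε i) = 1 := fun i => by cases ε i <;> simp [sgn]
  rw [Finset.sum_congr rfl fun i _ => hone i, Finset.sum_const, Finset.card_univ] at this
  simp at this
  exact hm (by simpa using this)

lemma bigP_ne_zero (hm : m ≠ 0) : bigP m ≠ 0 := by
  intro h
  have hF : bigF m ≠ 0 := by
    rw [bigF]
    exact Finset.prod_ne_zero_iff.mpr fun ε _ => lform_ne_zero hm ε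
  rw [← expand_bigP, h, map_zero] at hF
  exact hF rfl

lemma eval_bigP (w : Fin m → ℝ) (ε₀ : Fin m → Bool) (h0 : (∑ i, sgn (ε₀ i) * w i) = 0) :
    eval (fun i => (w i) ^ 2) (bigP m) = 0 := by
  classical
  have h1 : eval w (bigF m) = 0 := by
    rw [bigF, map_prod]
    refine Finset.prod_eq_zero (Finset.mem_univ ε₀) ?_
    rw [lform, map_sum]
    simpa using h0
  have h2 : ∀ q : MvPolynomial (Fin m) ℝ,
      eval w (expand 2 q) = eval (fun i => (w i) ^ 2) q := by
    intro q
    induction q using MvPolynomial.induction_on with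
    | C a => simp
    | add p q hp hq => simp [hp, hq]
    | mul_X p i hp => simp [expand_X, hp]
  rw [← h2, expand_bigP, h1]

end SqElim3

theorem square_elimination (n : ℕ) (hn : 2 ≤ n) :
    ∃ P : MvPolynomial (Fin (n + 1)) ℝ, P ≠ 0 ∧
      ∀ (t : Fin n → ℝ) (δ : ℝ), (∑ i, t i) = δ →
        MvPolynomial.eval (Fin.snoc (fun i => (t i) ^ 2) (δ ^ 2)) P = 0 := by
  classical
  refine ⟨bigP (n + 1), bigP_ne_zero (Nat.succ_ne_zero n), ?_⟩
  intro t δ hsum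
  set ε₀ : Fin (n + 1) → Bool := fun i => decide (i ≠ Fin.last n) with hε₀
  set w : Fin (n + 1) → ℝ := Fin.snoc t δ with hw
  have key : (∑ i, sgn (ε₀ i) * w i) = 0 := by
    rw [Fin.sum_univ_castSucc]
    have hlast : sgn (ε₀ (Fin.last n)) = -1 := by simp [hε₀, sgn]
    have hcast : ∀ i : Fin n, sgn (ε₀ i.castSucc) = 1 := fun i => by
      simp [hε₀, sgn, (Fin.castSucc_lt_last i).ne]
    rw [hw]
    rw [hlast, Fin.snoc_last,
      Finset.sum_congr rfl fun i _ => by rw [hcast i, Fin.snoc_castSucc, one_mul]]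
    rw [hsum]; ring
  have := eval_bigP w ε₀ key
  have hfun : (fun i => (w i) ^ 2)
      = (Fin.snoc (fun i => (t i) ^ 2) (δ ^ 2) : Fin (n + 1) → ℝ) := by
    funext i
    induction i using Fin.lastCases with
    | last => simp [hw]
    | cast i => simp [hw]
  rwa [hfun] at this
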